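/- Let X be a continuous space (c-space): for every x ∈ X there is a directed subset D with D → x, sup D = x, and d ≪_n x for all d ∈ D, where d ≪_n x means every net converging to x has some element above d. Then for every net (x_i)_{i∈I} in X converging to x, there exists a directed set D of eventual lower bounds of (x_i) with D → x; i.e., the pair ((x_i), x) belongs to the class S_X. -/
import Mathlib


/-- A net in `X`: a function from a (nonempty, directed) preordered index type to `X`. -/
structure PNet (X : Type) : Type 1 where
  ι : Type
  le : ι → ι → Prop
  refl : ∀ i, le i i
  trans : ∀ i j k, le i j → le j k → le i k
  nonempty : Nonempty ι
  directed : ∀ i j, ∃ k, le i k ∧ le j k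
  toFun : ι → X

/-- A net is eventually in a set. -/
def PNet.Eventually {X : Type} (n : PNet X) (U : Set X) : Prop :=
  ∃ j, ∀ k, n.le j k → n.toFun k ∈ U

/-- Convergence of a net in a topological space. -/
def PNet.ConvTo {X : Type} [TopologicalSpace X] (n : PNet X) (x : X) : Prop :=
  ∀ U : Set X, IsOpen U → x ∈ U → n.Eventually U

/-- The specialization order of a topological space: `x ≤ y` iff `x ∈ closure {y}`. -/
def specLe {X : Type} [TopologicalSpace X] (x y : X) : Prop := x ∈ closure {y}

/-- Convergence of a directed subset `D` (viewed as a monotone net indexed by itself)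
to a point `x`. -/
def dirConv {X : Type} [TopologicalSpace X] (D : Set X) (x : X) : Prop :=
  ∀ V : Set X, IsOpen V → x ∈ V → ∃ d ∈ D, ∀ e ∈ D, specLe d e → e ∈ V

/-- `y` is an eventual lower bound of the net `n`. -/
def eventualLB {X : Type} [TopologicalSpace X] (n : PNet X) (y : X) : Prop :=
  ∃ k, ∀ i, n.le k i → specLe y (n.toFun i)

/-- The pair `(n, x)` is in the class `S_X`: some directed set of eventual lower
bounds of `n` converges to `x`. -/
def SPair {X : Type} [TopologicalSpace X] (n : PNet X) (x : X) : Prop :=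
  ∃ D : Set X, D.Nonempty ∧ DirectedOn specLe D ∧ (∀ d ∈ D, eventualLB n d) ∧
    dirConv D x

/-- `d ≪ₙ x`: every net converging to `x` has some element above `d`. -/
def wbn {X : Type} [TopologicalSpace X] (d x : X) : Prop :=
  ∀ n : PNet X, n.ConvTo x → ∃ i, specLe d (n.toFun i)

/-- Let `X` be a continuous space (c-space): for every `x ∈ X` there is a directed
subset `D` with `D → x`, `sup D = x` (in the specialization order) and `d ≪ₙ x` for
all `d ∈ D`. Then for every net converging to `x`, some directed set of eventual
lower bounds of the net converges to `x`; i.e. the pair belongs to `S_X`. -/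
lemma wbn_eventualLB {X : Type} [TopologicalSpace X] {d x : X} (hd : wbn d x)
    (n : PNet X) (hn : n.ConvTo x) : eventualLB n d := by
  by_contra h
  simp only [eventualLB, not_exists, not_forall] at h
  -- for every k there is i ≥ k with ¬ specLe d (n i)
  have key : ∀ k, ∃ i, n.le k i ∧ ¬ specLe d (n.toFun i) := by
    intro k
    obtain ⟨i, hi, hni⟩ := h k
    exact ⟨i, hi, hni⟩
  have hne : Nonempty {i // ¬ specLe d (n.toFun i)} := by
    obtain ⟨k⟩ := n.nonempty
    obtain ⟨i, _, hi⟩ := key k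
    exact ⟨⟨i, hi⟩⟩
  set m : PNet X :=
    { ι := {i // ¬ specLe d (n.toFun i)}
      le := fun i j => n.le i.1 j.1
      refl := fun i => n.refl i.1
      trans := fun i j k hij hjk => n.trans _ _ _ hij hjk
      nonempty := hne
      directed := by
        intro i j
        obtain ⟨k, hik, hjk⟩ := n.directed i.1 j.1
        obtain ⟨i', hki', hi'⟩ := key k
        exact ⟨⟨i', hi'⟩, n.trans _ _ _ hik hki', n.trans _ _ _ hjk hki'⟩
      toFun := fun i => n.toFun i.1 }
  have hm : m.ConvTo x := by
    intro U hU hxU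
    obtain ⟨j0, hj0⟩ := hn U hU hxU
    obtain ⟨i', hji', hi'⟩ := key j0
    exact ⟨⟨i', hi'⟩, fun k hk => hj0 k.1 (n.trans _ _ _ hji' hk)⟩
  obtain ⟨i, hi⟩ := hd m hm
  exact i.2 hi

theorem stmt16 {X : Type} [TopologicalSpace X] [T0Space X]
    (hc : ∀ x : X, ∃ D : Set X, D.Nonempty ∧ DirectedOn specLe D ∧ dirConv D x ∧
      ((∀ d ∈ D, specLe d x) ∧ ∀ y : X, (∀ d ∈ D, specLe d y) → specLe x y) ∧
      ∀ d ∈ D, wbn d x) :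
    ∀ (n : PNet X) (x : X), n.ConvTo x → SPair n x := by
  intro n x hn
  obtain ⟨D, hDne, hDdir, hDconv, _, hwbn⟩ := hc x
  exact ⟨D, hDne, hDdir, fun d hd => wbn_eventualLB (hwbn d hd) n hn, hDconv⟩
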